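/- SPU maps are a.e. modular: let A, B, C be unital C*-algebras over ℂ and let F : B → A, G : A → B, and ξ : B → C be SPU maps such that G (F b) − b ∈ N_ξ for every b ∈ B (G is a disintegration relative to ξ). Then: (i) ξ (G (a * F b)) = ξ (G a * b) for all a ∈ A and b ∈ B (G satisfies the Bayes condition with respect to ω := ξ ∘ G and ξ); (ii) F (star b * c) − star (F b) * F c ∈ N_{ξ ∘ G} for all b, c ∈ B (F is (ξ ∘ G)-a.e. deterministic); (iii) ξ (G (a * F b) * x) = ξ (G a * b * x) for all a ∈ A and b, x ∈ B (G is ξ-a.e. modular with respect to F). -/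

import Mathlib

namespace SpuAux

variable {X : Type*} [CStarAlgebra X] [PartialOrder X] [StarOrderedRing X]

lemma csmul_nonneg (r : ℝ) (hr : 0 ≤ r) {x : X} (hx : 0 ≤ x) : 0 ≤ (r : ℂ) • x := by
  have h := star_left_conjugate_nonneg hx (((Real.sqrt r : ℝ) : ℂ) • 1)
  have hs : star ((((Real.sqrt r : ℝ)) : ℂ) • (1:X)) = (((Real.sqrt r : ℝ)) : ℂ) • (1:X) := by
    simp [star_smul, Complex.conj_ofReal]
  rw [hs] at h
  calc (0:X) ≤ _ := h
    _ = (r:ℂ) • x := by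
        rw [smul_mul_assoc, one_mul, mul_smul_comm, mul_one, smul_smul]
        norm_cast
        rw [Real.mul_self_sqrt hr]

lemma csmul_le (r : ℝ) (hr : 0 ≤ r) {x y : X} (h : x ≤ y) : (r : ℂ) • x ≤ (r : ℂ) • y := by
  rw [← sub_nonneg, ← smul_sub]
  exact csmul_nonneg r hr (sub_nonneg.2 h)

lemma le_zero_of_forall (h k : X) (H : ∀ t : ℝ, 0 < t → h ≤ (t:ℂ) • k) : h ≤ 0 := by
  have tend : Filter.Tendsto (fun n : ℕ => ((1/(n+1) : ℝ) : ℂ) • k) Filter.atTop (nhds 0) := by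
    have h1 : Filter.Tendsto (fun n : ℕ => ((1/(n+1) : ℝ) : ℂ)) Filter.atTop (nhds 0) := by
      exact (Complex.continuous_ofReal.tendsto 0).comp
        tendsto_one_div_add_atTop_nhds_zero_nat |>.congr (by simp)
    simpa using h1.smul_const k
  exact ge_of_tendsto tend (Filter.Eventually.of_forall fun n => H _ (by positivity))

lemma eq_zero_of_forall (h k : X) (Hp : ∀ t : ℝ, 0 < t → -h ≤ (t:ℂ) • k)
    (Hm : ∀ t : ℝ, 0 < t → h ≤ (t:ℂ) • k) : h = 0 := by
  have h1 : h ≤ 0 := le_zero_of_forall h k Hm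
  have h2 : -h ≤ 0 := le_zero_of_forall (-h) k Hp
  exact le_antisymm h1 (by simpa using h2)

/-- If `0 ≤ t•h + t²•k` for all real `t`, then `h = 0`. -/
lemma eq_zero_quad (h k : X) (H : ∀ t : ℝ, 0 ≤ (t:ℂ) • h + ((t:ℂ) * (t:ℂ)) • k) : h = 0 := by
  have htc : ∀ t : ℝ, 0 < t → (t:ℂ) ≠ 0 := fun t ht => by exact_mod_cast ht.ne'
  have key : ∀ t : ℝ, 0 < t → -h ≤ (t:ℂ) • k ∧ h ≤ (t:ℂ) • k := by
    intro t ht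
    have e1 : ((1/t : ℝ) : ℂ) * (t:ℂ) = 1 := by
      push_cast; exact one_div_mul_cancel (htc t ht)
    have e2 : ((1/t : ℝ) : ℂ) * ((t:ℂ) * (t:ℂ)) = (t:ℂ) := by
      push_cast; field_simp
    constructor
    · have h1 := csmul_nonneg (1/t) (by positivity) (H t)
      rw [smul_add, smul_smul, smul_smul, e1, e2, one_smul] at h1
      exact sub_nonneg.mp (by rwa [sub_neg_eq_add, add_comm])
    · have h0 := H (-t)
      have hneg : ((-t : ℝ) : ℂ) = -(t:ℂ) := by push_cast; ring
      rw [hneg] at h0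
      have h0' : 0 ≤ (t:ℂ) • (-h) + ((t:ℂ) * (t:ℂ)) • k := by
        rw [smul_neg]
        convert h0 using 2
        · rw [neg_smul]
        · ring_nf
      have h1 := csmul_nonneg (1/t) (by positivity) h0'
      rw [smul_add, smul_smul, smul_smul, e1, e2, one_smul] at h1
      have := sub_nonneg.mp (by rwa [sub_neg_eq_add, add_comm] : 0 ≤ (t:ℂ) • k - -(-h))
      simpa using this
  exact eq_zero_of_forall h k (fun t ht => (key t ht).1) (fun t ht => (key t ht).2)

/-- If `0 ≤ e + t•h` for all real `t`, then `h = 0`. -/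
lemma eq_zero_lin (e h : X) (H : ∀ t : ℝ, 0 ≤ e + (t:ℂ) • h) : h = 0 := by
  have htc : ∀ t : ℝ, 0 < t → (t:ℂ) ≠ 0 := fun t ht => by exact_mod_cast ht.ne'
  have key : ∀ s : ℝ, 0 < s → -h ≤ (s:ℂ) • e ∧ h ≤ (s:ℂ) • e := by
    intro s hs
    have e1 : ((s : ℝ) : ℂ) * ((1/s : ℝ) : ℂ) = 1 := by
      push_cast; exact mul_one_div_cancel (htc s hs)
    constructor
    · have h1 := csmul_nonneg s hs.le (H (1/s))
      rw [smul_add, smul_smul, e1, one_smul] at h1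
      exact sub_nonneg.mp (by rwa [sub_neg_eq_add])
    · have h0 := H (-(1/s))
      have hneg : ((-(1/s) : ℝ) : ℂ) = -((1/s : ℝ):ℂ) := by push_cast; ring
      rw [hneg, neg_smul, ← sub_eq_add_neg] at h0
      have h1 := csmul_nonneg s hs.le h0
      rw [smul_sub, smul_smul, e1, one_smul] at h1
      exact sub_nonneg.mp h1
  exact eq_zero_of_forall h e (fun t ht => (key t ht).1) (fun t ht => (key t ht).2)

lemma double_eq_zero {v : X} (h : v + v = 0) : v = 0 := by
  have h2 : (2:ℂ) • v = 0 := by rw [two_smul]; exact h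
  calc v = (2:ℂ)⁻¹ • ((2:ℂ) • v) := by rw [smul_smul]; norm_num
    _ = 0 := by rw [h2, smul_zero]

lemma I_smul_cancel {v : X} (h : Complex.I • v = 0) : v = 0 := by
  calc v = (Complex.I)⁻¹ • (Complex.I • v) := by
        rw [smul_smul, inv_mul_cancel₀ Complex.I_ne_zero, one_smul]
    _ = 0 := by rw [h, smul_zero]

lemma sq_le_norm_smul {p : X} (hp : 0 ≤ p) : p * p ≤ ‖p‖ • p := by
  obtain ⟨s, hstar, rfl⟩ : ∃ s : X, star s = s ∧ s * s = p :=
    ⟨CFC.sqrt p, IsSelfAdjoint.of_nonneg (CFC.sqrt_nonneg (a := p)), CFC.sqrt_mul_sqrt_self p hp⟩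
  have h := CStarAlgebra.star_left_conjugate_le_norm_smul (a := s) (b := s * s)
    (IsSelfAdjoint.of_nonneg hp)
  rw [hstar] at h
  calc s * s * (s * s) = s * (s * s) * s := by noncomm_ring
    _ ≤ ‖s * s‖ • (s * s) := h

section Maps
variable {Y : Type*} [CStarAlgebra Y] [PartialOrder Y] [StarOrderedRing Y]

/-- A map satisfying the Schwarz inequality is positive. -/
lemma spu_pos (Φ : X →ₗ[ℂ] Y) (hKS : ∀ x : X, star (Φ x) * Φ x ≤ Φ (star x * x)) :
    ∀ x : X, 0 ≤ x → 0 ≤ Φ x := by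
  intro x hx
  obtain ⟨s, hstar, rfl⟩ : ∃ s : X, star s = s ∧ s * s = x :=
    ⟨CFC.sqrt x, IsSelfAdjoint.of_nonneg (CFC.sqrt_nonneg (a := x)), CFC.sqrt_mul_sqrt_self x hx⟩
  calc (0:Y) ≤ star (Φ s) * Φ s := star_mul_self_nonneg _
    _ ≤ Φ (star s * s) := hKS s
    _ = Φ (s * s) := by rw [hstar]

lemma pos_mono (Φ : X →ₗ[ℂ] Y) (hpos : ∀ x : X, 0 ≤ x → 0 ≤ Φ x) :
    ∀ x y : X, x ≤ y → Φ x ≤ Φ y := by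
  intro x y h
  have := hpos _ (sub_nonneg.2 h)
  rw [map_sub] at this
  exact sub_nonneg.mp this

/-- A positive linear map is star-preserving. -/
lemma pos_star (Φ : X →ₗ[ℂ] Y) (hpos : ∀ x : X, 0 ≤ x → 0 ≤ Φ x) :
    ∀ x : X, Φ (star x) = star (Φ x) := by
  have hsa : ∀ s : X, IsSelfAdjoint s → IsSelfAdjoint (Φ s) := by
    intro s hs
    have h1 : Φ s = Φ (s⁺) - Φ (s⁻) := by rw [← map_sub, CFC.posPart_sub_negPart s hs]
    rw [h1]
    exact (IsSelfAdjoint.of_nonneg (hpos _ (CFC.posPart_nonneg s))).sub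
      (IsSelfAdjoint.of_nonneg (hpos _ (CFC.negPart_nonneg s)))
  intro x
  have hss : IsSelfAdjoint ((2⁻¹:ℂ) • (x + star x)) := by
    rw [IsSelfAdjoint, star_smul, show star (2⁻¹ : ℂ) = 2⁻¹ by norm_num [Complex.ext_iff],
      star_add, star_star, add_comm]
  have hws : IsSelfAdjoint ((Complex.I * 2⁻¹) • (x - star x)) := by
    rw [IsSelfAdjoint, star_smul, star_sub, star_star,
      show star (Complex.I * 2⁻¹) = -Complex.I * 2⁻¹ by norm_num [Complex.ext_iff]]
    module
  have hxs : x = (2⁻¹:ℂ) • (x + star x) + (2⁻¹:ℂ) • (x - star x) := by module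
  have hxstar : star x = (2⁻¹:ℂ) • (x + star x) - (2⁻¹:ℂ) • (x - star x) := by module
  have huw : (2⁻¹:ℂ) • (x - star x) = (-Complex.I) • ((Complex.I * 2⁻¹) • (x - star x)) := by
    rw [smul_smul, show (-Complex.I * (Complex.I * 2⁻¹) : ℂ) = 2⁻¹ by norm_num [Complex.ext_iff]]
  have hPhiu : star (Φ ((2⁻¹:ℂ) • (x - star x))) = - Φ ((2⁻¹:ℂ) • (x - star x)) := by
    conv_lhs => rw [huw]
    conv_rhs => rw [huw]
    rw [map_smul, star_smul, (hsa _ hws).star_eq,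
      show star (-Complex.I) = Complex.I from by simp, ← neg_smul, neg_neg]
  conv_lhs => rw [hxstar]
  conv_rhs => rw [hxs]
  rw [map_sub, map_add, star_add, (hsa _ hss).star_eq, hPhiu, sub_eq_add_neg]

/-- If `Φ` is positive, `0 ≤ p` and `Φ p = 0`, then `Φ (p* p) = 0`. -/
lemma null_of_pos_null (Φ : X →ₗ[ℂ] Y) (hpos : ∀ x : X, 0 ≤ x → 0 ≤ Φ x) {p : X}
    (hp : 0 ≤ p) (h0 : Φ p = 0) : Φ (star p * p) = 0 := by
  have hsa := (IsSelfAdjoint.of_nonneg hp).star_eq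
  have h1 : Φ (p * p) ≤ Φ (‖p‖ • p) := pos_mono Φ hpos _ _ (sq_le_norm_smul hp)
  have h2 : Φ (‖p‖ • p) = 0 := by
    rw [show (‖p‖ : ℝ) • p = ((‖p‖:ℝ):ℂ) • p from by rw [← algebraMap_smul ℂ]; norm_num,
      map_smul, h0, smul_zero]
  have h3 : 0 ≤ Φ (p * p) := by
    refine hpos _ ?_
    have := star_mul_self_nonneg p
    rwa [hsa] at this
  rw [hsa]
  exact le_antisymm (h1.trans_eq h2) h3

/-- C*-valued Cauchy–Schwarz-type lemma: if `Φ` is positive and `Φ (d* d) = 0`, then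
`Φ (c* d) = 0` and `Φ (d* c) = 0` for every `c`. -/
lemma cs_null (Φ : X →ₗ[ℂ] Y) (hpos : ∀ x : X, 0 ≤ x → 0 ≤ Φ x) {d : X}
    (hd : Φ (star d * d) = 0) (c : X) : Φ (star c * d) = 0 ∧ Φ (star d * c) = 0 := by
  have expand : ∀ z : ℂ, Φ (star (c + z • d) * (c + z • d)) = Φ (star c * c)
      + z • Φ (star c * d) + (starRingEnd ℂ z) • Φ (star d * c)
      + ((starRingEnd ℂ z) * z) • Φ (star d * d) := by
    intro z
    simp only [star_add, star_smul, add_mul, mul_add, smul_mul_assoc, mul_smul_comm, smul_smul,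
      map_add, map_smul, Complex.star_def]
    module
  have key : ∀ z : ℂ, 0 ≤ Φ (star c * c) + (z • Φ (star c * d)
      + (starRingEnd ℂ z) • Φ (star d * c)) := by
    intro z
    have h0 := hpos _ (star_mul_self_nonneg (c + z • d))
    rw [expand z, hd, smul_zero, add_zero] at h0
    rwa [← add_assoc]
  have hsum : Φ (star c * d) + Φ (star d * c) = 0 := by
    apply eq_zero_lin (Φ (star c * c))
    intro t
    have h0 := key (t:ℂ)
    rw [Complex.conj_ofReal] at h0
    exact le_of_le_of_eq h0 (by module)
  have hdiff : Complex.I • Φ (star c * d) - Complex.I • Φ (star d * c) = 0 := by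
    apply eq_zero_lin (Φ (star c * c))
    intro t
    have h0 := key ((t:ℂ) * Complex.I)
    rw [show starRingEnd ℂ ((t:ℂ) * Complex.I) = -((t:ℂ) * Complex.I) by
      simp [Complex.conj_ofReal]] at h0
    exact le_of_le_of_eq h0 (by module)
  have heq : Φ (star c * d) = Φ (star d * c) := by
    rw [← smul_sub] at hdiff
    exact sub_eq_zero.mp (I_smul_cancel hdiff)
  rw [heq] at hsum
  have h2 : Φ (star d * c) = 0 := double_eq_zero hsum
  exact ⟨heq.trans h2, h2⟩

/-- A.e. multiplicative domain lemma: if `G` is a Schwarz map, `ξ` is positive, and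
`ξ (G (q* q)) = ξ (G q * G q)`, then `ξ ∘ G` is a.e. multiplicative at `q`. -/
lemma ae_mult_domain {Z : Type*} [CStarAlgebra Z] [PartialOrder Z] [StarOrderedRing Z]
    (G : X →ₗ[ℂ] Y) (hGKS : ∀ x : X, star (G x) * G x ≤ G (star x * x))
    (ξ : Y →ₗ[ℂ] Z) (hpos : ∀ y : Y, 0 ≤ y → 0 ≤ ξ y) {q : X}
    (hq : ξ (G (star q * q)) = ξ (star (G q) * G q)) (c : X) :
    ξ (G (star c * q)) = ξ (star (G c) * G q) ∧ ξ (G (star q * c)) = ξ (star (G q) * G c) := by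
  set u : Z := ξ (G (star q * c)) - ξ (star (G q) * G c) with hu
  set v : Z := ξ (G (star c * q)) - ξ (star (G c) * G q) with hv
  set k : Z := ξ (G (star c * c)) - ξ (star (G c) * G c) with hk
  have expand : ∀ z : ℂ,
      ξ (G (star (q + z • c) * (q + z • c))) - ξ (star (G (q + z • c)) * G (q + z • c))
        = z • u + (starRingEnd ℂ z) • v + ((starRingEnd ℂ z) * z) • k := by
    intro z
    rw [hu, hv, hk]
    simp only [star_add, star_smul, add_mul, mul_add, smul_mul_assoc, mul_smul_comm, smul_smul,
      map_add, map_smul, Complex.star_def]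
    rw [show ξ (G (star q * q)) = ξ (star (G q) * G q) from hq]
    module
  have key : ∀ z : ℂ, 0 ≤ z • u + (starRingEnd ℂ z) • v + ((starRingEnd ℂ z) * z) • k := by
    intro z
    rw [← expand z]
    rw [← map_sub]
    exact hpos _ (sub_nonneg.2 (hGKS (q + z • c)))
  have hsum : u + v = 0 := by
    apply eq_zero_quad _ k
    intro t
    have h0 := key (t:ℂ)
    rw [Complex.conj_ofReal] at h0
    exact le_of_le_of_eq h0 (by module)
  have hdiff : Complex.I • u - Complex.I • v = 0 := by
    apply eq_zero_quad _ k
    intro t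
    have h0 := key ((t:ℂ) * Complex.I)
    rw [show starRingEnd ℂ ((t:ℂ) * Complex.I) = -((t:ℂ) * Complex.I) by
      simp [Complex.conj_ofReal]] at h0
    rw [show -((t:ℂ) * Complex.I) * ((t:ℂ) * Complex.I) = (t:ℂ) * (t:ℂ) by
      rw [show (-((t:ℂ) * Complex.I)) * ((t:ℂ) * Complex.I)
        = -(Complex.I*Complex.I) * ((t:ℂ) * (t:ℂ)) by ring, Complex.I_mul_I]
      ring] at h0
    exact le_of_le_of_eq h0 (by module)
  have heq : u = v := by
    rw [← smul_sub] at hdiff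
    exact sub_eq_zero.mp (I_smul_cancel hdiff)
  rw [heq] at hsum
  have h2 : v = 0 := double_eq_zero hsum
  have h1 : u = 0 := heq.trans h2
  exact ⟨sub_eq_zero.mp (hv ▸ h2), sub_eq_zero.mp (hu ▸ h1)⟩

end Maps

end SpuAux

open SpuAux in
/-- **SPU maps are a.e. modular.** Let `F : B → A`, `G : A → B`, and `ξ : B → C` be SPU maps
between unital C*-algebras over `ℂ` such that `G (F b) - b` lies in the right nullspace `N_ξ`
for every `b` (so `G` is a disintegration relative to `ξ`). Then, with `ω := ξ ∘ G`:
(i) `ξ (G (a * F b)) = ξ (G a * b)` (the Bayes condition);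
(ii) `F (star b * c) - star (F b) * F c ∈ N_{ξ ∘ G}` (`F` is `(ξ ∘ G)`-a.e. deterministic);
(iii) `ξ (G (a * F b) * x) = ξ (G a * b * x)` (`G` is `ξ`-a.e. modular with respect to `F`). -/
theorem spu_ae_modular
    {A B C : Type*}
    [CStarAlgebra A] [PartialOrder A] [StarOrderedRing A]
    [CStarAlgebra B] [PartialOrder B] [StarOrderedRing B]
    [CStarAlgebra C] [PartialOrder C] [StarOrderedRing C]
    (F : B →ₗ[ℂ] A) (hF1 : F 1 = 1)
    (hFKS : ∀ b : B, star (F b) * F b ≤ F (star b * b))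
    (G : A →ₗ[ℂ] B) (hG1 : G 1 = 1)
    (hGKS : ∀ a : A, star (G a) * G a ≤ G (star a * a))
    (ξ : B →ₗ[ℂ] C) (hξ1 : ξ 1 = 1)
    (hξKS : ∀ b : B, star (ξ b) * ξ b ≤ ξ (star b * b))
    (hdisint : ∀ b : B, ξ (star (G (F b) - b) * (G (F b) - b)) = 0) :
    (∀ (a : A) (b : B), ξ (G (a * F b)) = ξ (G a * b)) ∧
    (∀ b c : B,
      ξ (G (star (F (star b * c) - star (F b) * F c) * (F (star b * c) - star (F b) * F c)))
        = 0) ∧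
    (∀ (a : A) (b x : B), ξ (G (a * F b) * x) = ξ (G a * b * x)) := by
  have hξpos := spu_pos ξ hξKS
  have hGpos := spu_pos G hGKS
  have hFpos := spu_pos F hFKS
  have hξmono := pos_mono ξ hξpos
  have hGmono := pos_mono G hGpos
  have hGstar := pos_star G hGpos
  have hFstar := pos_star F hFpos
  have hωpos : ∀ a : A, 0 ≤ a → 0 ≤ (ξ.comp G) a := fun a ha => hξpos _ (hGpos _ ha)
  have hcs : ∀ (b c : B), ξ (star c * (G (F b) - b)) = 0 ∧ ξ (star (G (F b) - b) * c) = 0 :=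
    fun b c => cs_null ξ hξpos (hdisint b) c
  have hGF : ∀ y : B, ξ (G (F y)) = ξ y := by
    intro y
    have h := (hcs y 1).1
    rw [star_one, one_mul, map_sub] at h
    exact sub_eq_zero.mp h
  have hmulD : ∀ (b u : B), ξ (u * (G (F b) - b)) = 0 := by
    intro b u
    have h := (hcs b (star u)).1
    rwa [star_star] at h
  have hDmul : ∀ (b u : B), ξ (star (G (F b) - b) * u) = 0 := fun b u => (hcs b u).2
  -- generic quadratic expansion
  have hxy : ∀ x y : B, star x * x
      = star y * y + star y * (x - y) + star (x - y) * y + star (x - y) * (x - y) := by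
    intro x y
    have hxe : x = y + (x - y) := by abel
    conv_lhs => rw [hxe]
    rw [star_add, add_mul, mul_add, mul_add]
    abel
  have fact2 : ∀ b : B, ξ (star (G (F b)) * G (F b)) = ξ (star b * b) := by
    intro b
    rw [hxy (G (F b)) b, map_add, map_add, map_add, (hcs b b).1, hDmul b b, hdisint b]
    simp
  have fact3 : ∀ b : B, ξ (G (star (F b) * F b)) = ξ (star b * b) := by
    intro b
    refine le_antisymm ?_ ?_
    · calc ξ (G (star (F b) * F b)) ≤ ξ (G (F (star b * b))) := hξmono _ _ (hGmono _ _ (hFKS b))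
        _ = ξ (star b * b) := hGF _
    · calc ξ (star b * b) = ξ (star (G (F b)) * G (F b)) := (fact2 b).symm
        _ ≤ ξ (G (star (F b) * F b)) := hξmono _ _ (hGKS (F b))
  have md : ∀ (b : B) (c : A), ξ (G (star c * F b)) = ξ (star (G c) * G (F b))
      ∧ ξ (G (star (F b) * c)) = ξ (star (G (F b)) * G c) :=
    fun b c => ae_mult_domain G hGKS ξ hξpos ((fact3 b).trans (fact2 b).symm) c
  -- (i) Bayes condition
  have bayes : ∀ (a : A) (b : B), ξ (G (a * F b)) = ξ (G a * b) := by
    intro a b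
    have h1 := (md b (star a)).1
    rw [star_star, hGstar, star_star] at h1
    have h2 : ξ (G a * G (F b)) = ξ (G a * b) := by
      have hdecomp : G a * G (F b) = G a * b + G a * (G (F b) - b) := by
        rw [mul_sub]; abel
      rw [hdecomp, map_add, hmulD b (G a), add_zero]
    exact h1.trans h2
  -- (ii) a.e. determinism
  have csω : ∀ {d : A}, ξ.comp G (star d * d) = 0 →
      ∀ c : A, ξ.comp G (star c * d) = 0 ∧ ξ.comp G (star d * c) = 0 :=
    fun hd c => cs_null (ξ.comp G) hωpos hd c
  have diag : ∀ d : B, ξ.comp G (star (F (star d * d) - star (F d) * F d)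
      * (F (star d * d) - star (F d) * F d)) = 0 := by
    intro d
    have hΔpos : (0:A) ≤ F (star d * d) - star (F d) * F d := sub_nonneg.2 (hFKS d)
    have hω0 : ξ.comp G (F (star d * d) - star (F d) * F d) = 0 := by
      rw [LinearMap.comp_apply, map_sub, map_sub, hGF, fact3, sub_self]
    exact null_of_pos_null (ξ.comp G) hωpos hΔpos hω0
  have nadd : ∀ {m n : A}, ξ.comp G (star m * m) = 0 → ξ.comp G (star n * n) = 0 →
      ξ.comp G (star (m + n) * (m + n)) = 0 := by
    intro m n hm hn
    have h1 := (csω hn m).1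
    have h2 := (csω hm n).1
    have he : star (m + n) * (m + n) = star m * m + star m * n + star n * m + star n * n := by
      rw [star_add, add_mul, mul_add, mul_add]; abel
    rw [he, map_add, map_add, map_add, hm, hn, h1, h2]; simp
  have nsmul : ∀ (z : ℂ) {m : A}, ξ.comp G (star m * m) = 0 →
      ξ.comp G (star (z • m) * (z • m)) = 0 := by
    intro z m hm
    rw [star_smul, smul_mul_assoc, mul_smul_comm, smul_smul, map_smul, hm, smul_zero]
  have polar : ∀ b c : B, (4:ℂ) • (F (star b * c) - star (F b) * F c)
      = (F (star (b + c) * (b + c)) - star (F (b + c)) * F (b + c))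
      + (-Complex.I) • (F (star (b + Complex.I • c) * (b + Complex.I • c))
          - star (F (b + Complex.I • c)) * F (b + Complex.I • c))
      + (-1 : ℂ) • (F (star (b - c) * (b - c)) - star (F (b - c)) * F (b - c))
      + Complex.I • (F (star (b - Complex.I • c) * (b - Complex.I • c))
          - star (F (b - Complex.I • c)) * F (b - Complex.I • c)) := by
    intro b c
    simp only [star_add, star_sub, star_smul, add_mul, mul_add, sub_mul, mul_sub,
      smul_mul_assoc, mul_smul_comm, smul_smul, map_add, map_sub, map_smul,
      Complex.star_def, Complex.conj_I]
    match_scalars <;> norm_num [Complex.ext_iff]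
  have det : ∀ b c : B, ξ.comp G (star (F (star b * c) - star (F b) * F c)
      * (F (star b * c) - star (F b) * F c)) = 0 := by
    intro b c
    have h0 := nadd (nadd (nadd (diag (b + c)) (nsmul (-Complex.I) (diag (b + Complex.I • c))))
      (nsmul (-1 : ℂ) (diag (b - c)))) (nsmul Complex.I (diag (b - Complex.I • c)))
    have hrw : F (star b * c) - star (F b) * F c
        = (4⁻¹ : ℂ) • ((4:ℂ) • (F (star b * c) - star (F b) * F c)) := by
      rw [smul_smul]; norm_num
    rw [hrw, polar b c]
    exact nsmul _ h0
  -- (iii) modularity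
  have modular : ∀ (a : A) (b x : B), ξ (G (a * F b) * x) = ξ (G a * b * x) := by
    intro a b x
    have s1 : ξ (G (a * F b) * x) = ξ (G (a * F b) * G (F x)) := by
      have hd : G (a * F b) * G (F x) = G (a * F b) * x + G (a * F b) * (G (F x) - x) := by
        rw [mul_sub]; abel
      rw [hd, map_add, hmulD x (G (a * F b)), add_zero]
    have s2 : ξ (G ((a * F b) * F x)) = ξ (G (a * F b) * G (F x)) := by
      have h1 := (md x (star (a * F b))).1
      rw [star_star, hGstar, star_star] at h1
      exact h1
    have hΔ' : ξ.comp G (star (F (b * x) - F b * F x) * (F (b * x) - F b * F x)) = 0 := by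
      have h := det (star b) x
      rw [star_star, hFstar, star_star] at h
      exact h
    have s3 : ξ (G (a * F b * F x)) = ξ (G (a * F (b * x))) := by
      have hc := (csω hΔ' (star a)).1
      rw [star_star] at hc
      have hsplit : a * F (b * x) = a * (F b * F x) + a * (F (b * x) - F b * F x) := by
        rw [mul_sub]; abel
      calc ξ (G (a * F b * F x)) = ξ (G (a * (F b * F x))) := by rw [mul_assoc]
        _ = ξ (G (a * (F b * F x))) + ξ.comp G (a * (F (b * x) - F b * F x)) := by
            rw [hc, add_zero]
        _ = ξ (G (a * F (b * x))) := by
            rw [LinearMap.comp_apply, ← map_add, ← map_add, ← hsplit]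
    calc ξ (G (a * F b) * x) = ξ (G (a * F b) * G (F x)) := s1
      _ = ξ (G ((a * F b) * F x)) := s2.symm
      _ = ξ (G (a * F (b * x))) := s3
      _ = ξ (G a * (b * x)) := bayes a (b * x)
      _ = ξ (G a * b * x) := by rw [mul_assoc]
  refine ⟨bayes, ?_, modular⟩
  intro b c
  simpa using det b c
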